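/- Let V be a 4-dimensional real inner product space and let P, Q be two 2-dimensional subspaces with V = P ⊕ Q (transverse intersection, P ∩ Q = {0}). Suppose J is an orthogonal complex structure on V such that both P and Q are J-invariant and Q = P⊥. If g' is a new inner product on V agreeing with g on P and on Q but with g'(e₁, e₃) ≠ 0 while g'(e₂, e₄) = 0, g'(e₁,e₄) = g'(e₂,e₃) = 0, where (e₁,e₂) is a g-orthonormal basis of P with Je₁ = e₂ and (e₃,e₄) is a g-orthonormal basis of Q with Je₃ = e₄, then P and Q are not simultaneously complex for any orthogonal complex structure with respect to g'. -/

import Mathlib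

open RealInnerProductSpace

private lemma span_pair_mem (V : Type*) [NormedAddCommGroup V] [InnerProductSpace ℝ V]
    [FiniteDimensional ℝ V] (S : Submodule ℝ V) (hS : Module.finrank ℝ S = 2)
    (e f : V) (he : e ∈ S) (hf : f ∈ S) (hne : ‖e‖ = 1) (hnf : ‖f‖ = 1)
    (hef : ⟪e, f⟫ = 0) (v : V) (hv : v ∈ S) :
    ∃ a b : ℝ, a • e + b • f = v := by
  have hee : ⟪e, e⟫ = (1 : ℝ) := by
    rw [real_inner_self_eq_norm_mul_norm, hne]; ring
  have hff : ⟪f, f⟫ = (1 : ℝ) := by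
    rw [real_inner_self_eq_norm_mul_norm, hnf]; ring
  have hfe : ⟪f, e⟫ = 0 := by rw [real_inner_comm]; exact hef
  have hli : LinearIndependent ℝ ![e, f] := by
    rw [LinearIndependent.pair_iff]
    intro s t hst
    constructor
    · have := congrArg (fun x => ⟪e, x⟫) hst
      simpa [inner_add_right, inner_smul_right, hee, hef, hne] using this
    · have := congrArg (fun x => ⟪f, x⟫) hst
      simpa [inner_add_right, inner_smul_right, hff, hfe, hnf] using this
  have hrange : Set.range ![e, f] = {e, f} := by
    simp [Matrix.range_cons, Matrix.range_empty, Set.pair_comm]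
  have hspan : Submodule.span ℝ ({e, f} : Set V) = S := by
    apply Submodule.eq_of_le_of_finrank_le
    · rw [Submodule.span_le]
      intro x hx
      rcases hx with h | h
      · subst h; exact he
      · simp at h; subst h; exact hf
    · rw [hS]
      have := finrank_span_eq_card hli
      rw [hrange] at this
      simp at this
      omega
  have : v ∈ Submodule.span ℝ ({e, f} : Set V) := hspan ▸ hv
  exact Submodule.mem_span_pair.mp this

theorem stmt_11 (V : Type*) [NormedAddCommGroup V] [InnerProductSpace ℝ V]
    [FiniteDimensional ℝ V] (hdim : Module.finrank ℝ V = 4)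
    (P Q : Submodule ℝ V)
    (hPdim : Module.finrank ℝ P = 2) (hQdim : Module.finrank ℝ Q = 2)
    (hPQ : IsCompl P Q) (hQperp : Q = Pᗮ)
    (J : V →ₗ[ℝ] V)
    (hJ2 : ∀ v : V, J (J v) = -v)
    (hJorth : ∀ v w : V, ⟪J v, J w⟫ = ⟪v, w⟫)
    (hJP : ∀ v ∈ P, J v ∈ P) (hJQ : ∀ v ∈ Q, J v ∈ Q)
    (e₁ e₂ e₃ e₄ : V)
    (he₁P : e₁ ∈ P) (he₂P : e₂ ∈ P) (he₃Q : e₃ ∈ Q) (he₄Q : e₄ ∈ Q)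
    (he₁ : ‖e₁‖ = 1) (he₂ : ‖e₂‖ = 1) (he₁₂ : ⟪e₁, e₂⟫ = 0)
    (he₃ : ‖e₃‖ = 1) (he₄ : ‖e₄‖ = 1) (he₃₄ : ⟪e₃, e₄⟫ = 0)
    (hJe₁ : J e₁ = e₂) (hJe₃ : J e₃ = e₄)
    (g' : V →ₗ[ℝ] V →ₗ[ℝ] ℝ)
    (hsymm : ∀ v w : V, g' v w = g' w v)
    (hpos : ∀ v : V, v ≠ 0 → 0 < g' v v)
    (hgP : ∀ v ∈ P, ∀ w ∈ P, g' v w = ⟪v, w⟫)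
    (hgQ : ∀ v ∈ Q, ∀ w ∈ Q, g' v w = ⟪v, w⟫)
    (h13 : g' e₁ e₃ ≠ 0) (h24 : g' e₂ e₄ = 0)
    (h14 : g' e₁ e₄ = 0) (h23 : g' e₂ e₃ = 0) :
    ¬ ∃ J' : V →ₗ[ℝ] V, (∀ v : V, J' (J' v) = -v) ∧
      (∀ v w : V, g' (J' v) (J' w) = g' v w) ∧
      (∀ v ∈ P, J' v ∈ P) ∧ (∀ v ∈ Q, J' v ∈ Q) := by
  rintro ⟨J', hJ'2, hJ'orth, hJ'P, hJ'Q⟩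
  have hee₁ : ⟪e₁, e₁⟫ = (1 : ℝ) := by
    rw [real_inner_self_eq_norm_mul_norm, he₁]; ring
  have hee₃ : ⟪e₃, e₃⟫ = (1 : ℝ) := by
    rw [real_inner_self_eq_norm_mul_norm, he₃]; ring
  obtain ⟨a, b, hab⟩ :=
    span_pair_mem V P hPdim e₁ e₂ he₁P he₂P he₁ he₂ he₁₂ (J' e₁) (hJ'P e₁ he₁P)
  obtain ⟨c, d, hcd⟩ :=
    span_pair_mem V Q hQdim e₃ e₄ he₃Q he₄Q he₃ he₄ he₃₄ (J' e₃) (hJ'Q e₃ he₃Q)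
  have skew₁ : g' e₁ (J' e₁) = 0 := by
    have h := hJ'orth e₁ (J' e₁)
    rw [hJ'2, map_neg] at h
    have h2 : g' (J' e₁) e₁ = g' e₁ (J' e₁) := hsymm _ _
    linarith
  have ha : a = 0 := by
    have hinner : ⟪e₁, J' e₁⟫ = a := by
      rw [← hab]
      simp [inner_add_right, inner_smul_right, hee₁, he₁₂, he₁]
    have := hgP e₁ he₁P (J' e₁) (hJ'P e₁ he₁P)
    rw [skew₁, hinner] at this
    linarith
  have skew₃ : g' e₃ (J' e₃) = 0 := by
    have h := hJ'orth e₃ (J' e₃)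
    rw [hJ'2, map_neg] at h
    have h2 : g' (J' e₃) e₃ = g' e₃ (J' e₃) := hsymm _ _
    linarith
  have hc : c = 0 := by
    have hinner : ⟪e₃, J' e₃⟫ = c := by
      rw [← hcd]
      simp [inner_add_right, inner_smul_right, hee₃, he₃₄, he₃]
    have := hgQ e₃ he₃Q (J' e₃) (hJ'Q e₃ he₃Q)
    rw [skew₃, hinner] at this
    linarith
  have hJ'e₁ : J' e₁ = b • e₂ := by rw [← hab, ha]; simp
  have hJ'e₃ : J' e₃ = d • e₄ := by rw [← hcd, hc]; simp
  have hfin := hJ'orth e₁ e₃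
  rw [hJ'e₁, hJ'e₃] at hfin
  simp only [map_smul, LinearMap.smul_apply, smul_eq_mul, h24] at hfin
  exact h13 (by linarith)
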